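/- Let r ≥ 2 and let Q be a blowup (with nonempty parts) of a 2-covered r-graph. Then for every r-graph H and every uncovered pair of vertices u, v of H, 2·inj(Q, H) ≤ inj(Q, H_{u→v}) + inj(Q, H_{v→u}). Consequently, the map H ↦ inj(Q, H) is symmetrization-increasing: for every H and every uncovered pair u, v, either inj(Q,H) < max{inj(Q,H_{u→v}), inj(Q,H_{v→u})} or inj(Q,H) = inj(Q,H_{u→v}) = inj(Q,H_{v→u}). -/

import Mathlib

open Finset

attribute [local instance 10] Classical.propDecidable

noncomputable section

/-- An `r`-uniform hypergraph on a finite set of vertices labeled by natural numbers: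
a finite collection of `r`-element subsets of the vertex set. -/
structure RGraph (r : ℕ) where
  verts : Finset ℕ
  edges : Finset (Finset ℕ)
  edge_card : ∀ e ∈ edges, e.card = r
  edge_sub : ∀ e ∈ edges, e ⊆ verts

namespace RGraph

variable {r : ℕ}

/-- number of vertices -/
def nv (H : RGraph r) : ℕ := H.verts.card

/-- delete a set of vertices (and all edges meeting it) -/
def deleteVerts (H : RGraph r) (S : Finset ℕ) : RGraph r where
  verts := H.verts \ S
  edges := H.edges.filter fun e => ∀ v ∈ S, v ∉ e
  edge_card := fun e he => H.edge_card e (Finset.mem_filter.1 he).1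
  edge_sub := by
    intro e he x hx
    rcases Finset.mem_filter.1 he with ⟨he1, he2⟩
    exact Finset.mem_sdiff.2 ⟨H.edge_sub e he1 hx, fun hxS => he2 x hxS hx⟩

/-- delete a single vertex -/
def deleteVert (H : RGraph r) (v : ℕ) : RGraph r := H.deleteVerts {v}

/-- induced subgraph on a set of vertices -/
def induce (H : RGraph r) (U : Finset ℕ) : RGraph r where
  verts := H.verts ∩ U
  edges := H.edges.filter fun e => e ⊆ U
  edge_card := fun e he => H.edge_card e (Finset.mem_filter.1 he).1
  edge_sub := fun e he x hx => Finset.mem_inter.2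
    ⟨H.edge_sub e (Finset.mem_filter.1 he).1 hx, (Finset.mem_filter.1 he).2 hx⟩

/-- delete a single edge -/
def deleteEdge (H : RGraph r) (e : Finset ℕ) : RGraph r where
  verts := H.verts
  edges := H.edges.erase e
  edge_card := fun f hf => H.edge_card f (Finset.mem_of_mem_erase hf)
  edge_sub := fun f hf => H.edge_sub f (Finset.mem_of_mem_erase hf)

/-- subgraph relation (may omit vertices and edges) -/
def IsSubgraph (H' H : RGraph r) : Prop := H'.verts ⊆ H.verts ∧ H'.edges ⊆ H.edges

/-- the link of a vertex -/
def link (H : RGraph r) (v : ℕ) : Finset (Finset ℕ) :=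
  (H.edges.filter fun e => v ∈ e).image fun e => e.erase v

/-- a pair of vertices is uncovered if no edge contains both -/
def Uncovered (H : RGraph r) (u v : ℕ) : Prop := ∀ e ∈ H.edges, ¬(u ∈ e ∧ v ∈ e)

/-- `H.symmetrize u v` is `H_{u → v}`: delete all edges containing `u` and add
`{u} ∪ e` for every `e` in the link of `v`. -/
def symmetrize (H : RGraph r) (u v : ℕ) : RGraph r where
  verts := insert u H.verts
  edges := (H.edges.filter fun e => u ∉ e) ∪
    ((H.edges.filter fun e => v ∈ e ∧ u ∉ e ∧ u ≠ v).image fun e => insert u (e.erase v))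
  edge_card := by
    intro e he
    rcases Finset.mem_union.1 he with he | he
    · exact H.edge_card e (Finset.mem_filter.1 he).1
    · rcases Finset.mem_image.1 he with ⟨f, hf, rfl⟩
      rcases Finset.mem_filter.1 hf with ⟨hf1, hv, hu, -⟩
      have h1 : u ∉ f.erase v := fun h => hu (Finset.mem_of_mem_erase h)
      have hfc := H.edge_card f hf1
      have hr1 : 0 < r := hfc ▸ Finset.card_pos.2 ⟨v, hv⟩
      rw [Finset.card_insert_of_notMem h1, Finset.card_erase_of_mem hv, hfc]
      omega
  edge_sub := by
    intro e he x hx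
    rcases Finset.mem_union.1 he with he | he
    · exact Finset.mem_insert_of_mem (H.edge_sub e (Finset.mem_filter.1 he).1 hx)
    · rcases Finset.mem_image.1 he with ⟨f, hf, rfl⟩
      rcases Finset.mem_insert.1 hx with rfl | hx
      · exact Finset.mem_insert_self _ _
      · exact Finset.mem_insert_of_mem
          (H.edge_sub f (Finset.mem_filter.1 hf).1 (Finset.mem_of_mem_erase hx))

/-- `H` is symmetrized if every uncovered pair of (distinct) vertices is equivalent,
i.e. has equal links. -/
def Symmetrized (H : RGraph r) : Prop :=
  ∀ u ∈ H.verts, ∀ v ∈ H.verts, u ≠ v → H.Uncovered u v → H.link u = H.link v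

/-- neighbourhood of a vertex: all vertices sharing an edge with `v` -/
def nbhd (H : RGraph r) (v : ℕ) : Finset ℕ :=
  H.verts.filter fun u => ∃ e ∈ H.edges, u ∈ e ∧ v ∈ e

/-- the link of a pair of vertices -/
def pairLink (H : RGraph r) (u v : ℕ) : Finset (Finset ℕ) :=
  (H.edges.filter fun e => u ∈ e ∧ v ∈ e).image fun e => (e.erase u).erase v

/-- `N_H^k(v)`: for `r ≥ 3`, the set of vertices `u` whose pair-link with `v`
contains at least `k` pairwise disjoint `(r-2)`-sets; for `r = 2`, the neighbourhood. -/
def bigNbhd (H : RGraph r) (k v : ℕ) : Finset ℕ :=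
  if r = 2 then H.nbhd v
  else H.verts.filter fun u => ∃ A ∈ (H.pairLink u v).powerset,
    k ≤ A.card ∧ ∀ a ∈ A, ∀ b ∈ A, a ≠ b → a ∩ b = ∅

/-- number of edges containing a vertex -/
def edeg (H : RGraph r) (v : ℕ) : ℕ := (H.edges.filter fun e => v ∈ e).card

end RGraph

/-! ## The Γ-framework -/

/-- `Γ`-degree of a vertex -/
def gdeg {r : ℕ} (Γ : RGraph r → ℝ) (H : RGraph r) (v : ℕ) : ℝ :=
  Γ H - Γ (H.deleteVert v)

/-- the extremal number `ex_Γ(n)` -/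
def exG {r : ℕ} (Γ : RGraph r → ℝ) (n : ℕ) : ℝ :=
  sSup {x | ∃ H : RGraph r, H.nv = n ∧ Γ H = x}

/-- the extremal average degree `exdeg_Γ(n) = k ⬝ ex_Γ(n) / n` -/
def exdeg {r : ℕ} (Γ : RGraph r → ℝ) (k : ℝ) (n : ℕ) : ℝ :=
  k * exG Γ n / n

/-- `Γ` is `k`-uniform -/
def IsUniform {r : ℕ} (Γ : RGraph r → ℝ) (k : ℝ) : Prop :=
  ∃ h : ℕ → ℝ, Filter.Tendsto (fun n => h n / exG Γ n) Filter.atTop (nhds 0) ∧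
    ∀ H : RGraph r, 0 < Γ H → |(∑ v ∈ H.verts, gdeg Γ H v) - k * Γ H| ≤ h H.nv

/-- `Γ` is `(δ*, c*, C*)`-smooth -/
def IsSmooth {r : ℕ} (Γ : RGraph r → ℝ) (k δs cs Cs : ℝ) : Prop :=
  ∃ h : ℕ → ℝ, Filter.Tendsto (fun n => h n / exG Γ n) Filter.atTop (nhds 0) ∧
    ∀ (n : ℕ) (δ : ℝ), 0 ≤ δ → δ ≤ δs → ∀ m : ℕ, (m : ℝ) = δ * n →
      exG Γ (n - m) ≤ exG Γ n - δ * k * exG Γ n + Cs * δ ^ (1 + cs) * exG Γ n + h n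

/-- `Γ` is locally `C`-Lipschitz -/
def IsLocallyLipschitz {r : ℕ} (Γ : RGraph r → ℝ) (k C : ℝ) : Prop :=
  ∃ h : ℕ → ℝ, Filter.Tendsto (fun n => h n / exdeg Γ k n) Filter.atTop (nhds 0) ∧
    ∀ (n : ℕ) (H : RGraph r), H.nv = n → 0 < Γ H → ∀ U ⊆ H.verts, ∀ v ∈ U,
      gdeg Γ H v - C * (((n : ℝ) - U.card) / n) * exdeg Γ k n - h n
        ≤ gdeg Γ (H.induce U) v

/-- `Γ` is continuous -/
def GammaContinuous {r : ℕ} (Γ : RGraph r → ℝ) : Prop :=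
  ∀ ε : ℝ, 0 < ε → ∃ δ : ℝ, 0 < δ ∧ ∃ N₀ : ℕ, ∀ n ≥ N₀, ∀ H H' : RGraph r,
    H.nv = n → H'.verts = H.verts → H'.edges ⊆ H.edges →
    (H.edges.card : ℝ) - δ * (n : ℝ) ^ r ≤ (H'.edges.card : ℝ) →
    Γ H - ε * exG Γ n ≤ Γ H'

/-- `Γ` is locally monotone -/
def IsLocallyMonotone {r : ℕ} (Γ : RGraph r → ℝ) : Prop :=
  ∀ H H' : RGraph r, 0 < Γ H → H'.IsSubgraph H → ∀ v ∈ H'.verts,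
    gdeg Γ H' v ≤ gdeg Γ H v

/-- a hereditary family of `r`-graphs -/
def Hereditary {r : ℕ} (ℌ : Set (RGraph r)) : Prop :=
  ∀ H ∈ ℌ, ∀ H' : RGraph r, H'.IsSubgraph H → H' ∈ ℌ

/-- `Γ` is symmetrization-increasing -/
def SymmetrizationIncreasing {r : ℕ} (Γ : RGraph r → ℝ) : Prop :=
  ∀ H : RGraph r, ∀ u ∈ H.verts, ∀ v ∈ H.verts, u ≠ v → H.Uncovered u v →
    Γ H < max (Γ (H.symmetrize u v)) (Γ (H.symmetrize v u)) ∨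
      (Γ H = Γ (H.symmetrize u v) ∧ Γ H = Γ (H.symmetrize v u))

/-- `Γ` is symmetrized-stable with respect to `ℌ` -/
def SymmetrizedStable {r : ℕ} (Γ : RGraph r → ℝ) (ℌ : Set (RGraph r)) : Prop :=
  ∀ H : RGraph r, H.Symmetrized → 0 < Γ H → H ∈ ℌ

/-- `Γ` is `(ε, N₀)`-vertex-extendable with respect to `ℌ` -/
def VertexExtendable {r : ℕ} (Γ : RGraph r → ℝ) (k : ℝ) (ℌ : Set (RGraph r))
    (ε : ℝ) (N₀ : ℕ) : Prop :=
  ∀ n ≥ N₀, ∀ H : RGraph r, H.nv = n →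
    (∀ v ∈ H.verts, (1 - ε) * exdeg Γ k n ≤ gdeg Γ H v) →
    (∃ v ∈ H.verts, H.deleteVert v ∈ ℌ) → H ∈ ℌ

/-- `Γ` is degree-stable with respect to `ℌ` -/
def DegreeStable {r : ℕ} (Γ : RGraph r → ℝ) (k : ℝ) (ℌ : Set (RGraph r)) : Prop :=
  ∃ ε : ℝ, 0 < ε ∧ ∃ N₀ : ℕ, ∀ n ≥ N₀, ∀ H : RGraph r, H.nv = n →
    (∀ v ∈ H.verts, (1 - ε) * exdeg Γ k n ≤ gdeg Γ H v) → H ∈ ℌ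

/-- `Γ` is edge-stable with respect to `ℌ` -/
def EdgeStableG {r : ℕ} (Γ : RGraph r → ℝ) (ℌ : Set (RGraph r)) : Prop :=
  ∀ ε : ℝ, 0 < ε → ∃ δ : ℝ, 0 < δ ∧ ∃ N₀ : ℕ, ∀ n ≥ N₀, ∀ H : RGraph r, H.nv = n →
    (1 - δ) * exG Γ n ≤ Γ H →
    ∃ H' : RGraph r, H'.verts = H.verts ∧ H'.edges ⊆ H.edges ∧
      ((H.edges \ H'.edges).card : ℝ) ≤ ε * (n : ℝ) ^ r ∧ H' ∈ ℌ

/-- `Γh` is a trajectory of `Γ` -/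
def IsTrajectoryOf {r : ℕ} (Γh Γ : RGraph r → ℝ) : Prop :=
  (∃ f : ℕ → ℝ, Filter.Tendsto (fun n => f n / exG Γh n) Filter.atTop (nhds 0) ∧
    ∀ n : ℕ, exG Γh n - f n ≤ exG Γ n) ∧
  ∃ g h : ℕ → ℝ,
    Filter.Tendsto (fun n => g n / (n : ℝ) ^ r) Filter.atTop (nhds 0) ∧
    Filter.Tendsto (fun n => h n / exG Γ n) Filter.atTop (nhds 0) ∧
    ∀ H : RGraph r, 0 < Γ H → ∃ H' : RGraph r, H'.IsSubgraph H ∧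
      (H.edges.card : ℝ) - g H.nv ≤ (H'.edges.card : ℝ) ∧ Γ H - h H.nv ≤ Γh H'

/-! ## Counting injective homomorphisms -/

/-- The set of injective homomorphisms from `Q` to `H`, encoded as maps `ℕ → ℕ`
which are the identity outside `Q.verts`. -/
def injHoms {r : ℕ} (Q H : RGraph r) : Set (ℕ → ℕ) :=
  {φ | Set.InjOn φ ↑Q.verts ∧ Set.MapsTo φ ↑Q.verts ↑H.verts ∧
    (∀ e ∈ Q.edges, e.image φ ∈ H.edges) ∧ ∀ x, x ∉ Q.verts → φ x = x}

/-- `inj(Q, H)`: the number of injective homomorphisms from `Q` to `H` -/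
def injc {r : ℕ} (Q H : RGraph r) : ℕ := (injHoms Q H).ncard

/-- `d_{Q,H}(v)`: the number of injective homomorphisms from `Q` to `H`
whose image contains `v` -/
def qdeg {r : ℕ} (Q H : RGraph r) (v : ℕ) : ℕ :=
  {φ ∈ injHoms Q H | ∃ x ∈ Q.verts, φ x = v}.ncard

/-- `H` is `F₀`-free: `F₀` is not (isomorphic to) a subgraph of `H` -/
def FreeOf {r : ℕ} (F₀ H : RGraph r) : Prop := injHoms F₀ H = ∅

/-- `Q` has no isolated vertices -/
def NoIsolated {r : ℕ} (Q : RGraph r) : Prop := ∀ v ∈ Q.verts, ∃ e ∈ Q.edges, v ∈ e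

/-- `H` is `ℓ`-partite (equivalently, `K_ℓ^r`-colorable) -/
def IsPartite {r : ℕ} (H : RGraph r) (ℓ : ℕ) : Prop :=
  ∃ c : ℕ → ℕ, (∀ v ∈ H.verts, c v < ℓ) ∧
    ∀ e ∈ H.edges, ∀ a ∈ e, ∀ b ∈ e, c a = c b → a = b

/-- chromatic number of an `r`-graph -/
def chrNum {r : ℕ} (H : RGraph r) : ℕ := sInf {ℓ | IsPartite H ℓ}

/-- a graph is edge-critical if deleting some edge lowers its chromatic number -/
def EdgeCritical (F : RGraph 2) : Prop :=
  ∃ e ∈ F.edges, chrNum (F.deleteEdge e) < chrNum F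

/-- an `r`-graph is `2`-covered if every pair of distinct vertices lies in an edge -/
def TwoCovered {r : ℕ} (G : RGraph r) : Prop :=
  ∀ u ∈ G.verts, ∀ v ∈ G.verts, u ≠ v → ∃ e ∈ G.edges, u ∈ e ∧ v ∈ e

/-- `Q` is a blowup (with nonempty parts) of `G` -/
def IsBlowupOf {r : ℕ} (Q G : RGraph r) : Prop :=
  ∃ p : ℕ → ℕ, Set.MapsTo p ↑Q.verts ↑G.verts ∧ Set.SurjOn p ↑Q.verts ↑G.verts ∧
    ∀ e : Finset ℕ, e ⊆ Q.verts → e.card = r →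
      (e ∈ Q.edges ↔ (Set.InjOn p ↑e ∧ e.image p ∈ G.edges))

/-- the shadow `∂_{r-2} G`: the graph of all pairs of vertices covered by an edge -/
def shadow2 {r : ℕ} (G : RGraph r) : RGraph 2 where
  verts := G.verts
  edges := (G.verts.powersetCard 2).filter fun e => ∃ E ∈ G.edges, e ⊆ E
  edge_card := fun e he => (Finset.mem_powersetCard.1 (Finset.mem_filter.1 he).1).2
  edge_sub := fun e he => (Finset.mem_powersetCard.1 (Finset.mem_filter.1 he).1).1

/-- the complete `r`-graph `K_ℓ^r` on vertex set `{0, …, ℓ-1}` -/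
def completeRG (r ℓ : ℕ) : RGraph r where
  verts := Finset.range ℓ
  edges := (Finset.range ℓ).powersetCard r
  edge_card := fun e he => (Finset.mem_powersetCard.1 he).2
  edge_sub := fun e he => (Finset.mem_powersetCard.1 he).1

/-- the complete multipartite `r`-graph on `[n] = {0, …, n-1}` whose parts are the
fibres of the coloring `c`: edges are the rainbow `r`-sets. -/
def completePartite (r n : ℕ) (c : ℕ → ℕ) : RGraph r where
  verts := Finset.range n
  edges := ((Finset.range n).powersetCard r).filter fun e =>
    ∀ a ∈ e, ∀ b ∈ e, c a = c b → a = b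
  edge_card := fun e he => (Finset.mem_powersetCard.1 (Finset.mem_filter.1 he).1).2
  edge_sub := fun e he => (Finset.mem_powersetCard.1 (Finset.mem_filter.1 he).1).1

/-- the `5`-cycle `C₅` -/
def cycle5 : RGraph 2 where
  verts := Finset.range 5
  edges := {{0, 1}, {1, 2}, {2, 3}, {3, 4}, {4, 0}}
  edge_card := by decide
  edge_sub := by decide

/-- the set of (not necessarily injective) homomorphisms from `Q` to `G`,
encoded as maps `ℕ → ℕ` which are the identity outside `Q.verts` -/
def homsSet {r : ℕ} (Q G : RGraph r) : Set (ℕ → ℕ) :=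
  {φ | Set.MapsTo φ ↑Q.verts ↑G.verts ∧ (∀ e ∈ Q.edges, e.image φ ∈ G.edges) ∧
    ∀ x, x ∉ Q.verts → φ x = x}

/-- `E` is the `r`-uniform expansion `H_F^r` of the graph `F` -/
def IsExpansion (r : ℕ) (F : RGraph 2) (E : RGraph r) : Prop :=
  ∃ f : Finset ℕ → Finset ℕ,
    (∀ e ∈ F.edges, (f e).card = r - 2 ∧ Disjoint (f e) F.verts) ∧
    (∀ e ∈ F.edges, ∀ e' ∈ F.edges, e ≠ e' → Disjoint (f e) (f e')) ∧
    E.verts = F.verts ∪ F.edges.biUnion f ∧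
    E.edges = F.edges.image fun e => e ∪ f e

/-- `H` is `H_F^r`-free -/
def ExpansionFree (r : ℕ) (F : RGraph 2) (H : RGraph r) : Prop :=
  ∀ E : RGraph r, IsExpansion r F E → FreeOf E H

/-- `inj(n, Q, H_F^r)` -/
def injExExp (r : ℕ) (Q : RGraph r) (F : RGraph 2) (n : ℕ) : ℕ :=
  sSup {t | ∃ H : RGraph r, H.nv = n ∧ ExpansionFree r F H ∧ injc Q H = t}

/-- `inj(n, Q, F₀)` for a single forbidden `r`-graph `F₀` -/
def injExF {r : ℕ} (Q F₀ : RGraph r) (n : ℕ) : ℕ :=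
  sSup {t | ∃ H : RGraph r, H.nv = n ∧ FreeOf F₀ H ∧ injc Q H = t}

/-- max of `inj(Q, H)` over `ℓ`-partite `H` on `n` vertices -/
def injExPartite (r : ℕ) (Q : RGraph r) (ℓ n : ℕ) : ℕ :=
  sSup {t | ∃ H : RGraph r, H.nv = n ∧ IsPartite H ℓ ∧ injc Q H = t}

/-- `H` is a complete `ℓ`-partite `r`-graph (possibly with empty parts) -/
def IsCompleteMultipartite {r : ℕ} (H : RGraph r) (ℓ : ℕ) : Prop :=
  ∃ c : ℕ → ℕ, (∀ v ∈ H.verts, c v < ℓ) ∧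
    ∀ e : Finset ℕ, e ⊆ H.verts → e.card = r →
      ((∀ a ∈ e, ∀ b ∈ e, c a = c b → a = b) ↔ e ∈ H.edges)

/-- `H` is a complete `k`-partite `r`-graph with nonempty parts -/
def IsCompleteMultipartiteStrict {r : ℕ} (H : RGraph r) (k : ℕ) : Prop :=
  ∃ c : ℕ → ℕ, (∀ v ∈ H.verts, c v < k) ∧ (∀ i < k, ∃ v ∈ H.verts, c v = i) ∧
    ∀ e : Finset ℕ, e ⊆ H.verts → e.card = r →
      ((∀ a ∈ e, ∀ b ∈ e, c a = c b → a = b) ↔ e ∈ H.edges)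

/-- `T` is a balanced complete `ℓ`-partite `r`-graph (part sizes differ by at most one) -/
def IsBalancedCompleteMultipartite {r : ℕ} (T : RGraph r) (ℓ : ℕ) : Prop :=
  ∃ c : ℕ → ℕ, (∀ v ∈ T.verts, c v < ℓ) ∧
    (∀ i < ℓ, ∀ j < ℓ, (T.verts.filter fun v => c v = i).card
      ≤ (T.verts.filter fun v => c v = j).card + 1) ∧
    ∀ e : Finset ℕ, e ⊆ T.verts → e.card = r →
      ((∀ a ∈ e, ∀ b ∈ e, c a = c b → a = b) ↔ e ∈ T.edges)

/-- the `Q`-Lagrange polynomial of `G`, evaluated at a weight vector `x` -/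
def lagPoly {r : ℕ} (Q G : RGraph r) (x : ℕ → ℝ) : ℝ :=
  ∑ᶠ φ ∈ homsSet Q G, ∏ i ∈ Q.verts.image φ, x i

/-- the `Q`-Lagrangian of `G` -/
def lagrangian {r : ℕ} (Q G : RGraph r) : ℝ :=
  sSup {t | ∃ x : ℕ → ℝ, (∀ i, 0 ≤ x i) ∧ (∀ i, i ∉ G.verts → x i = 0) ∧
    (∑ i ∈ G.verts, x i) = 1 ∧ t = lagPoly Q G x}

/-- `W` is a weak expansion of the clique `K_m`: obtained from `K_m` by adding
`r - 2` new vertices to each edge, where the added sets may intersect each other -/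
def IsWeakCliqueExpansion (r m : ℕ) (W : RGraph r) : Prop :=
  ∃ (V : Finset ℕ) (f : Finset ℕ → Finset ℕ), V.card = m ∧
    (∀ e ∈ V.powersetCard 2, (f e).card = r - 2 ∧ Disjoint (f e) V) ∧
    W.verts = V ∪ (V.powersetCard 2).biUnion f ∧
    W.edges = (V.powersetCard 2).image fun e => e ∪ f e

/-- `H` is `𝒦_m^r`-free (contains no weak expansion of `K_m`) -/
def WeakExpFree (r m : ℕ) (H : RGraph r) : Prop :=
  ∀ W : RGraph r, IsWeakCliqueExpansion r m W → FreeOf W H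

/-- `inj(n, Q, 𝒦_m^r)` -/
def injExWeak (r : ℕ) (Q : RGraph r) (m n : ℕ) : ℕ :=
  sSup {t | ∃ H : RGraph r, H.nv = n ∧ WeakExpFree r m H ∧ injc Q H = t}

/-- `F₀` is `Q`-edge-stable with respect to the family of `ℓ`-partite `r`-graphs -/
def QEdgeStablePartite {r : ℕ} (Q F₀ : RGraph r) (ℓ : ℕ) : Prop :=
  ∀ ε : ℝ, 0 < ε → ∃ δ : ℝ, 0 < δ ∧ ∃ N₀ : ℕ, ∀ n ≥ N₀, ∀ H : RGraph r,
    H.nv = n → FreeOf F₀ H → (1 - δ) * (injExF Q F₀ n : ℝ) ≤ (injc Q H : ℝ) →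
    ∃ H' : RGraph r, H'.verts = H.verts ∧ H'.edges ⊆ H.edges ∧
      ((H.edges \ H'.edges).card : ℝ) ≤ ε * (n : ℝ) ^ r ∧ IsPartite H' ℓ

/-- `H_F^r` is `Q`-edge-stable with respect to the family of `ℓ`-partite `r`-graphs -/
def QEdgeStablePartiteExp (r : ℕ) (Q : RGraph r) (F : RGraph 2) (ℓ : ℕ) : Prop :=
  ∀ ε : ℝ, 0 < ε → ∃ δ : ℝ, 0 < δ ∧ ∃ N₀ : ℕ, ∀ n ≥ N₀, ∀ H : RGraph r,
    H.nv = n → ExpansionFree r F H →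
    (1 - δ) * (injExExp r Q F n : ℝ) ≤ (injc Q H : ℝ) →
    ∃ H' : RGraph r, H'.verts = H.verts ∧ H'.edges ⊆ H.edges ∧
      ((H.edges \ H'.edges).card : ℝ) ≤ ε * (n : ℝ) ^ r ∧ IsPartite H' ℓ

/-- `Q` is `F₀`-Turán-stable (with `ℓ` parts) -/
def TuranStableF {r : ℕ} (Q F₀ : RGraph r) (ℓ : ℕ) : Prop :=
  ∀ ε : ℝ, 0 < ε → ∃ δ : ℝ, 0 < δ ∧ ∃ N₀ : ℕ, ∀ n ≥ N₀, ∀ H : RGraph r,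
    H.nv = n → FreeOf F₀ H → (1 - δ) * (injExF Q F₀ n : ℝ) ≤ (injc Q H : ℝ) →
    ∃ T : RGraph r, T.verts = H.verts ∧ IsBalancedCompleteMultipartite T ℓ ∧
      (((H.edges \ T.edges).card + (T.edges \ H.edges).card : ℕ) : ℝ) ≤ ε * (n : ℝ) ^ r

/-- `Q` is `H_F^r`-Turán-stable (with `ℓ` parts) -/
def TuranStableExp (r : ℕ) (Q : RGraph r) (F : RGraph 2) (ℓ : ℕ) : Prop :=
  ∀ ε : ℝ, 0 < ε → ∃ δ : ℝ, 0 < δ ∧ ∃ N₀ : ℕ, ∀ n ≥ N₀, ∀ H : RGraph r,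
    H.nv = n → ExpansionFree r F H →
    (1 - δ) * (injExExp r Q F n : ℝ) ≤ (injc Q H : ℝ) →
    ∃ T : RGraph r, T.verts = H.verts ∧ IsBalancedCompleteMultipartite T ℓ ∧
      (((H.edges \ T.edges).card + (T.edges \ H.edges).card : ℕ) : ℝ) ≤ ε * (n : ℝ) ^ r



/-! ## Auxiliary material for Statement 17 -/

section Statement17Aux

variable {r : ℕ}

lemma image_erase_injOn' (f : ℕ → ℕ) (s : Finset ℕ)
    (hinj : Set.InjOn f ↑s) (a : ℕ) (ha : a ∈ s) :
    (s.erase a).image f = (s.image f).erase (f a) := by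
  ext b
  simp only [Finset.mem_image, Finset.mem_erase]
  constructor
  · rintro ⟨c, ⟨hca, hcs⟩, rfl⟩
    exact ⟨fun h => hca (hinj (Finset.mem_coe.mpr hcs) (Finset.mem_coe.mpr ha) h),
      ⟨c, hcs, rfl⟩⟩
  · rintro ⟨hb, c, hcs, rfl⟩
    exact ⟨c, ⟨fun h => hb (by rw [h]), hcs⟩, rfl⟩

lemma image_swap_to (f : Finset ℕ) (u v : ℕ) (hv : v ∈ f) :
    f.image (fun w => if w = v then u else w) = insert u (f.erase v) := by
  ext a
  simp only [Finset.mem_image, Finset.mem_insert, Finset.mem_erase]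
  constructor
  · rintro ⟨w, hw, rfl⟩
    by_cases h : w = v
    · left; rw [if_pos h]
    · right; rw [if_neg h]; exact ⟨h, hw⟩
  · rintro (rfl | ⟨hav, haf⟩)
    · exact ⟨v, hv, by rw [if_pos rfl]⟩
    · exact ⟨a, haf, by rw [if_neg hav]⟩

lemma injHoms_finite (Q H : RGraph r) : (injHoms Q H).Finite := by
  have h : injHoms Q H ⊆ Set.range (fun (g : {x // x ∈ Q.verts} → {y // y ∈ H.verts}) =>
      fun x : ℕ => if hx : x ∈ Q.verts then (g ⟨x, hx⟩ : ℕ) else x) := by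
    rintro φ ⟨hinj, hmaps, hedge, hid⟩
    refine ⟨fun x => ⟨φ x.1, hmaps (Finset.mem_coe.mpr x.2)⟩, ?_⟩
    funext x
    by_cases hx : x ∈ Q.verts
    · simp [hx]
    · simp [hx, hid x hx]
  exact (Set.finite_range _).subset h

/-- redirect the `v`-preimage(s) of `φ` (within `Q.verts`) to `u` -/
def redirect (Q : RGraph r) (u v : ℕ) (φ : ℕ → ℕ) : ℕ → ℕ :=
  fun x => if x ∈ Q.verts ∧ φ x = v then u else φ x

lemma mem_injHoms_symmetrize_of_not_only_u (Q G : RGraph r) (hG2 : TwoCovered G)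
    (hQG : IsBlowupOf Q G) (H : RGraph r) (u v : ℕ) (huv : u ≠ v)
    (hunc : H.Uncovered u v) (φ : ℕ → ℕ) (hφ : φ ∈ injHoms Q H)
    (hnot : ¬(u ∈ φ '' (Q.verts : Set ℕ) ∧ v ∉ φ '' (Q.verts : Set ℕ))) :
    φ ∈ injHoms Q (H.symmetrize u v) := by
  obtain ⟨p, hpm, hps, hpe⟩ := hQG
  obtain ⟨hinj, hmaps, hedge, hid⟩ := hφ
  refine ⟨hinj, ?_, ?_, hid⟩
  · intro x hx
    exact Finset.mem_coe.mpr (Finset.mem_insert_of_mem (Finset.mem_coe.mp (hmaps hx)))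
  · intro e he
    have hf : e.image φ ∈ H.edges := hedge e he
    have hesub : e ⊆ Q.verts := Q.edge_sub e he
    by_cases hu : u ∈ e.image φ
    · -- hard case: the image of `e` contains `u`
      obtain ⟨x, hxe, hφx⟩ := Finset.mem_image.mp hu
      have hxQ : x ∈ Q.verts := hesub hxe
      have huim : u ∈ φ '' (Q.verts : Set ℕ) := ⟨x, Finset.mem_coe.mpr hxQ, hφx⟩
      have hvim : v ∈ φ '' (Q.verts : Set ℕ) := by
        by_contra hvim
        exact hnot ⟨huim, hvim⟩
      obtain ⟨y, hyQ', hφy⟩ := hvim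
      have hyQ : y ∈ Q.verts := Finset.mem_coe.mp hyQ'
      have hvf : v ∉ e.image φ := fun hv => hunc _ hf ⟨hu, hv⟩
      have hyne : y ∉ e := fun h => hvf (Finset.mem_image.mpr ⟨y, h, hφy⟩)
      have hinje : Set.InjOn φ ↑e := hinj.mono (by exact_mod_cast hesub)
      have hpinj_e : Set.InjOn p ↑e ∧ e.image p ∈ G.edges :=
        (hpe e hesub (Q.edge_card e he)).mp he
      have hpxy : p x = p y := by
        by_contra hne
        obtain ⟨E, hE, hpxE, hpyE⟩ :=
          hG2 (p x) (hpm (Finset.mem_coe.mpr hxQ)) (p y) (hpm hyQ') hne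
        have hEsub : E ⊆ G.verts := G.edge_sub E hE
        have hch : ∀ w, ∃ z, w ∈ E →
            z ∈ Q.verts ∧ p z = w ∧ (w = p x → z = x) ∧ (w = p y → z = y) := by
          intro w
          by_cases hw : w ∈ E
          · by_cases h1 : w = p x
            · exact ⟨x, fun _ => ⟨hxQ, h1.symm, fun _ => rfl,
                fun h2 => absurd (h1.symm.trans h2) hne⟩⟩
            · by_cases h2 : w = p y
              · exact ⟨y, fun _ => ⟨hyQ, h2.symm, fun h1' => absurd h1' h1, fun _ => rfl⟩⟩
              · obtain ⟨z, hzQ, hpz⟩ := hps (Finset.mem_coe.mpr (hEsub hw))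
                exact ⟨z, fun _ => ⟨Finset.mem_coe.mp hzQ, hpz,
                  fun h1' => absurd h1' h1, fun h2' => absurd h2' h2⟩⟩
          · exact ⟨0, fun h => absurd h hw⟩
        choose q hq using hch
        have hqinj : Set.InjOn q ↑E := by
          intro a ha b hb hab
          have h1 := (hq a (Finset.mem_coe.mp ha)).2.1
          have h2 := (hq b (Finset.mem_coe.mp hb)).2.1
          rw [← h1, ← h2, hab]
        have h1 : E.image q ⊆ Q.verts := by
          intro z hz
          obtain ⟨w, hw, rfl⟩ := Finset.mem_image.mp hz
          exact (hq w hw).1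
        have h2 : (E.image q).card = r := by
          rw [Finset.card_image_of_injOn hqinj]
          exact G.edge_card E hE
        have h4 : (E.image q).image p = E := by
          rw [Finset.image_image]
          have h5 : E.image (p ∘ q) = E.image id :=
            Finset.image_congr (fun w hw => (hq w (Finset.mem_coe.mp hw)).2.1)
          rw [h5, Finset.image_id]
        have h3 : Set.InjOn p ↑(E.image q) := by
          intro a ha b hb hab
          obtain ⟨w1, hw1, rfl⟩ := Finset.mem_image.mp (Finset.mem_coe.mp ha)
          obtain ⟨w2, hw2, rfl⟩ := Finset.mem_image.mp (Finset.mem_coe.mp hb)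
          rw [(hq w1 hw1).2.1, (hq w2 hw2).2.1] at hab
          rw [hab]
        have he₀ : E.image q ∈ Q.edges :=
          (hpe (E.image q) h1 h2).mpr ⟨h3, by rw [h4]; exact hE⟩
        have hx0 : x ∈ E.image q :=
          Finset.mem_image.mpr ⟨p x, hpxE, ((hq (p x) hpxE).2.2.1 rfl)⟩
        have hy0 : y ∈ E.image q :=
          Finset.mem_image.mpr ⟨p y, hpyE, ((hq (p y) hpyE).2.2.2 rfl)⟩
        exact hunc _ (hedge (E.image q) he₀)
          ⟨Finset.mem_image.mpr ⟨x, hx0, hφx⟩, Finset.mem_image.mpr ⟨y, hy0, hφy⟩⟩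
      -- now `p x = p y`; swap `x` for `y` in `e`
      have hy' : y ∉ e.erase x := fun h => hyne (Finset.mem_of_mem_erase h)
      have he'sub : insert y (e.erase x) ⊆ Q.verts := by
        intro z hz
        rcases Finset.mem_insert.mp hz with rfl | hz
        · exact hyQ
        · exact hesub (Finset.mem_of_mem_erase hz)
      have hcard_e : e.card = r := Q.edge_card e he
      have hrpos : 0 < e.card := Finset.card_pos.mpr ⟨x, hxe⟩
      have he'card : (insert y (e.erase x)).card = r := by
        rw [Finset.card_insert_of_notMem hy', Finset.card_erase_of_mem hxe]
        omega
      have hpinj' : Set.InjOn p ↑(insert y (e.erase x)) := by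
        intro a ha b hb hab
        simp only [Finset.coe_insert, Set.mem_insert_iff, Finset.mem_coe,
          Finset.mem_erase] at ha hb
        rcases ha with rfl | ⟨hax, hae⟩ <;> rcases hb with rfl | ⟨hbx, hbe⟩
        · rfl
        · have hxb : x = b := hpinj_e.1 (Finset.mem_coe.mpr hxe)
            (Finset.mem_coe.mpr hbe) (hpxy.trans hab)
          exact absurd hxb.symm hbx
        · have hax' : a = x := hpinj_e.1 (Finset.mem_coe.mpr hae)
            (Finset.mem_coe.mpr hxe) (hab.trans hpxy.symm)
          exact absurd hax' hax
        · exact hpinj_e.1 (Finset.mem_coe.mpr hae) (Finset.mem_coe.mpr hbe) hab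
      have hpe'im : (insert y (e.erase x)).image p = e.image p := by
        rw [Finset.image_insert, ← hpxy, image_erase_injOn' p e hpinj_e.1 x hxe,
          Finset.insert_erase (Finset.mem_image.mpr ⟨x, hxe, rfl⟩)]
      have he' : insert y (e.erase x) ∈ Q.edges :=
        (hpe _ he'sub he'card).mpr ⟨hpinj', by rw [hpe'im]; exact hpinj_e.2⟩
      have hg : (insert y (e.erase x)).image φ ∈ H.edges := hedge _ he'
      have hφe' : (insert y (e.erase x)).image φ = insert v ((e.image φ).erase u) := by
        rw [Finset.image_insert, hφy, image_erase_injOn' φ e hinje x hxe, hφx]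
      rw [hφe'] at hg
      refine Finset.mem_union_right _ ?_
      refine Finset.mem_image.mpr ⟨insert v ((e.image φ).erase u), ?_, ?_⟩
      · refine Finset.mem_filter.mpr ⟨hg, Finset.mem_insert_self _ _, ?_, huv⟩
        intro hmem
        rcases Finset.mem_insert.mp hmem with h | h
        · exact huv h
        · exact Finset.notMem_erase u _ h
      · rw [Finset.erase_insert (fun h => hvf (Finset.mem_of_mem_erase h)),
          Finset.insert_erase hu]
    · exact Finset.mem_union_left _ (Finset.mem_filter.mpr ⟨hf, hu⟩)

lemma redirect_mem (Q : RGraph r) (H : RGraph r) (u v : ℕ) (huv : u ≠ v)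
    (φ : ℕ → ℕ) (hφ : φ ∈ injHoms Q H)
    (hvim : v ∈ φ '' (Q.verts : Set ℕ)) (huim : u ∉ φ '' (Q.verts : Set ℕ)) :
    redirect Q u v φ ∈ injHoms Q (H.symmetrize u v) := by
  obtain ⟨hinj, hmaps, hedge, hid⟩ := hφ
  refine ⟨?_, ?_, ?_, ?_⟩
  · intro a ha b hb hab
    have haQ : a ∈ Q.verts := Finset.mem_coe.mp ha
    have hbQ : b ∈ Q.verts := Finset.mem_coe.mp hb
    unfold redirect at hab
    by_cases h1 : φ a = v <;> by_cases h2 : φ b = v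
    · exact hinj ha hb (h1.trans h2.symm)
    · rw [if_pos ⟨haQ, h1⟩, if_neg (fun h => h2 h.2)] at hab
      exact absurd ⟨b, hb, hab.symm⟩ huim
    · rw [if_neg (fun h => h1 h.2), if_pos ⟨hbQ, h2⟩] at hab
      exact absurd ⟨a, ha, hab⟩ huim
    · rw [if_neg (fun h => h1 h.2), if_neg (fun h => h2 h.2)] at hab
      exact hinj ha hb hab
  · intro x hx
    unfold redirect
    by_cases h : x ∈ Q.verts ∧ φ x = v
    · rw [if_pos h]
      exact Finset.mem_coe.mpr (Finset.mem_insert_self _ _)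
    · rw [if_neg h]
      exact Finset.mem_coe.mpr (Finset.mem_insert_of_mem (Finset.mem_coe.mp (hmaps hx)))
  · intro e he
    have hf : e.image φ ∈ H.edges := hedge e he
    have hesub : e ⊆ Q.verts := Q.edge_sub e he
    have hunf : u ∉ e.image φ := by
      intro h
      obtain ⟨x, hx, hφx⟩ := Finset.mem_image.mp h
      exact huim ⟨x, Finset.mem_coe.mpr (hesub hx), hφx⟩
    have himg : e.image (redirect Q u v φ)
        = (e.image φ).image (fun w => if w = v then u else w) := by
      rw [Finset.image_image]
      refine Finset.image_congr (fun x hx => ?_)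
      have hxQ : x ∈ Q.verts := hesub (Finset.mem_coe.mp hx)
      show (if x ∈ Q.verts ∧ φ x = v then u else φ x) = if φ x = v then u else φ x
      by_cases h : φ x = v
      · rw [if_pos ⟨hxQ, h⟩, if_pos h]
      · rw [if_neg (fun hh => h hh.2), if_neg h]
    by_cases hvf : v ∈ e.image φ
    · rw [himg, image_swap_to _ u v hvf]
      exact Finset.mem_union_right _ (Finset.mem_image.mpr ⟨e.image φ,
        Finset.mem_filter.mpr ⟨hf, hvf, hunf, huv⟩, rfl⟩)
    · have hid2 : (e.image φ).image (fun w => if w = v then u else w)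
          = (e.image φ).image id := by
        refine Finset.image_congr (fun w hw => ?_)
        show (if w = v then u else w) = w
        rw [if_neg]
        intro h
        exact hvf (h ▸ Finset.mem_coe.mp hw)
      rw [himg, hid2, Finset.image_id]
      exact Finset.mem_union_left _ (Finset.mem_filter.mpr ⟨hf, hunf⟩)
  · intro x hx
    unfold redirect
    rw [if_neg (fun h => hx h.1)]
    exact hid x hx

lemma key_count (Q G : RGraph r) (hG2 : TwoCovered G) (hQG : IsBlowupOf Q G)
    (H : RGraph r) (u v : ℕ) (huv : u ≠ v) (hunc : H.Uncovered u v) :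
    {φ ∈ injHoms Q H | ¬(u ∈ φ '' (Q.verts : Set ℕ) ∧ v ∉ φ '' (Q.verts : Set ℕ))}.ncard
      + {φ ∈ injHoms Q H | v ∈ φ '' (Q.verts : Set ℕ) ∧ u ∉ φ '' (Q.verts : Set ℕ)}.ncard
      ≤ injc Q (H.symmetrize u v) := by
  set T := {φ ∈ injHoms Q H |
    ¬(u ∈ φ '' (Q.verts : Set ℕ) ∧ v ∉ φ '' (Q.verts : Set ℕ))} with hT
  set B := {φ ∈ injHoms Q H |
    v ∈ φ '' (Q.verts : Set ℕ) ∧ u ∉ φ '' (Q.verts : Set ℕ)} with hB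
  have hS₁fin := injHoms_finite Q (H.symmetrize u v)
  have hTsub : T ⊆ injHoms Q (H.symmetrize u v) := fun φ hφ =>
    mem_injHoms_symmetrize_of_not_only_u Q G hG2 hQG H u v huv hunc φ hφ.1 hφ.2
  have hBsub : (redirect Q u v) '' B ⊆ injHoms Q (H.symmetrize u v) := by
    rintro ψ ⟨φ, hφ, rfl⟩
    exact redirect_mem Q H u v huv φ hφ.1 hφ.2.1 hφ.2.2
  have hmemu : ∀ φ ∈ B, u ∈ (redirect Q u v φ) '' (Q.verts : Set ℕ) := by
    rintro φ ⟨hφ, ⟨y, hy, hφy⟩, huim⟩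
    exact ⟨y, hy, by unfold redirect; rw [if_pos ⟨Finset.mem_coe.mp hy, hφy⟩]⟩
  have hmemv : ∀ φ ∈ B, v ∉ (redirect Q u v φ) '' (Q.verts : Set ℕ) := by
    rintro φ ⟨hφ, hvim, huim⟩ ⟨x, hx, hψx⟩
    unfold redirect at hψx
    by_cases h : x ∈ Q.verts ∧ φ x = v
    · rw [if_pos h] at hψx
      exact huv hψx
    · rw [if_neg h] at hψx
      exact h ⟨Finset.mem_coe.mp hx, hψx⟩
  have hdisj : Disjoint T ((redirect Q u v) '' B) := by
    rw [Set.disjoint_left]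
    rintro ψ hψT ⟨φ, hφB, rfl⟩
    exact hψT.2 ⟨hmemu φ hφB, hmemv φ hφB⟩
  have hinjB : Set.InjOn (redirect Q u v) B := by
    rintro φ1 hφ1 φ2 hφ2 h
    funext x
    by_cases hx : x ∈ Q.verts
    · have hx' := congrFun h x
      unfold redirect at hx'
      by_cases h1 : φ1 x = v <;> by_cases h2 : φ2 x = v
      · rw [h1, h2]
      · rw [if_pos ⟨hx, h1⟩, if_neg (fun hh => h2 hh.2)] at hx'
        exact absurd ⟨x, Finset.mem_coe.mpr hx, hx'.symm⟩ hφ2.2.2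
      · rw [if_neg (fun hh => h1 hh.2), if_pos ⟨hx, h2⟩] at hx'
        exact absurd ⟨x, Finset.mem_coe.mpr hx, hx'⟩ hφ1.2.2
      · rw [if_neg (fun hh => h1 hh.2), if_neg (fun hh => h2 hh.2)] at hx'
        exact hx'
    · rw [hφ1.1.2.2.2 x hx, hφ2.1.2.2.2 x hx]
  calc T.ncard + B.ncard = T.ncard + ((redirect Q u v) '' B).ncard := by
        rw [Set.ncard_image_of_injOn hinjB]
    _ = (T ∪ (redirect Q u v) '' B).ncard :=
        (Set.ncard_union_eq hdisj (hS₁fin.subset hTsub) (hS₁fin.subset hBsub)).symm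
    _ ≤ injc Q (H.symmetrize u v) :=
        Set.ncard_le_ncard (Set.union_subset hTsub hBsub) hS₁fin

lemma injc_split (Q H : RGraph r) (u v : ℕ) :
    injc Q H
      = {φ ∈ injHoms Q H |
          ¬(u ∈ φ '' (Q.verts : Set ℕ) ∧ v ∉ φ '' (Q.verts : Set ℕ))}.ncard
      + {φ ∈ injHoms Q H |
          u ∈ φ '' (Q.verts : Set ℕ) ∧ v ∉ φ '' (Q.verts : Set ℕ)}.ncard := by
  have hfin := injHoms_finite Q H
  have hU : injHoms Q H
      = {φ ∈ injHoms Q H |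
          ¬(u ∈ φ '' (Q.verts : Set ℕ) ∧ v ∉ φ '' (Q.verts : Set ℕ))}
      ∪ {φ ∈ injHoms Q H |
          u ∈ φ '' (Q.verts : Set ℕ) ∧ v ∉ φ '' (Q.verts : Set ℕ)} := by
    ext φ
    constructor
    · intro h
      by_cases hp : u ∈ φ '' (Q.verts : Set ℕ) ∧ v ∉ φ '' (Q.verts : Set ℕ)
      · exact Or.inr ⟨h, hp⟩
      · exact Or.inl ⟨h, hp⟩
    · rintro (⟨h, -⟩ | ⟨h, -⟩) <;> exact h
  have hd : Disjoint
      {φ ∈ injHoms Q H |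
        ¬(u ∈ φ '' (Q.verts : Set ℕ) ∧ v ∉ φ '' (Q.verts : Set ℕ))}
      {φ ∈ injHoms Q H |
        u ∈ φ '' (Q.verts : Set ℕ) ∧ v ∉ φ '' (Q.verts : Set ℕ)} := by
    rw [Set.disjoint_left]
    rintro φ ⟨-, h1⟩ ⟨-, h2⟩
    exact h1 h2
  show (injHoms Q H).ncard = _
  conv_lhs => rw [hU]
  exact Set.ncard_union_eq hd (hfin.subset (Set.sep_subset _ _))
    (hfin.subset (Set.sep_subset _ _))

end Statement17Aux


/-- **Theorem (Statement 17).** If `Q` is a blowup of a `2`-covered `r`-graph, then for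
every `H` and every uncovered pair `u, v` of vertices, `2 inj(Q,H) ≤ inj(Q,H_{u→v}) +
inj(Q,H_{v→u})`; consequently the map `H ↦ inj(Q,H)` is symmetrization-increasing. -/
theorem statement17 (r : ℕ) (hr : 2 ≤ r)
    (Q G : RGraph r) (hG2 : TwoCovered G) (hQG : IsBlowupOf Q G) :
    ∀ H : RGraph r, ∀ u ∈ H.verts, ∀ v ∈ H.verts, u ≠ v → H.Uncovered u v →
      (2 * injc Q H ≤ injc Q (H.symmetrize u v) + injc Q (H.symmetrize v u)) ∧
      (injc Q H < max (injc Q (H.symmetrize u v)) (injc Q (H.symmetrize v u)) ∨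
        (injc Q H = injc Q (H.symmetrize u v) ∧
          injc Q H = injc Q (H.symmetrize v u))) := by
  intro H u hu v hv huv hunc
  have hunc' : H.Uncovered v u := fun e he h => hunc e he ⟨h.2, h.1⟩
  have k1 := key_count Q G hG2 hQG H u v huv hunc
  have k2 := key_count Q G hG2 hQG H v u (Ne.symm huv) hunc'
  have s1 := injc_split Q H u v
  have s2 := injc_split Q H v u
  have hmain : 2 * injc Q H ≤ injc Q (H.symmetrize u v) + injc Q (H.symmetrize v u) := by
    omega
  refine ⟨hmain, ?_⟩
  rcases Nat.lt_or_ge (injc Q H)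
    (max (injc Q (H.symmetrize u v)) (injc Q (H.symmetrize v u))) with h | h
  · exact Or.inl h
  · obtain ⟨h1, h2⟩ := max_le_iff.mp h
    right
    omega


end
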